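/- Suppose the propensity score is linear: e(x) = a₀ + a₁ᵀx with e(X) = P(Z=1|X). Let p = P(Z=1) ∈ (0,1), μ = E(X), μ_t = E(X|Z=1), μ_c = E(X|Z=0), A = p·Var(X|Z=1) + (1−p)·Var(X|Z=0) invertible, c = (μ_t − μ_c)ᵀA⁻¹(μ_t − μ_c). Then a₁ = [p(1−p)/(1 + p(1−p)c)]·A⁻¹(μ_t − μ_c) and a₀ = p − a₁ᵀμ. -/

import Mathlib

open MeasureTheory Matrix

/-- If the propensity score is linear, `e(x) = a₀ + a₁ᵀx`, then its coefficients are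
determined by the moments of `X`: `a₁ = [p(1−p)/(1 + p(1−p)c)] A⁻¹ (μ_t − μ_c)` and
`a₀ = p − a₁ᵀ μ`, where `A = p Var(X|Z=1) + (1−p) Var(X|Z=0)` and
`c = (μ_t − μ_c)ᵀ A⁻¹ (μ_t − μ_c)`. -/
theorem linear_propensity_coefficients {k : ℕ}
    {Ω : Type*} [MeasurableSpace Ω] (μ : Measure Ω) [IsProbabilityMeasure μ]
    (X : Ω → Fin k → ℝ) (hX : Measurable X) (hX2 : MemLp X 2 μ)
    (a0 : ℝ) (a1 : Fin k → ℝ)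
    (e : Ω → ℝ) (he : ∀ ω, e ω = a0 + a1 ⬝ᵥ X ω)
    (he01 : ∀ ω, 0 ≤ e ω ∧ e ω ≤ 1)
    (p : ℝ) (hp : p = ∫ ω, e ω ∂μ) (hp0 : 0 < p) (hp1 : p < 1)
    (μt μc μall : Fin k → ℝ)
    (hμt : μt = p⁻¹ • ∫ ω, e ω • X ω ∂μ)
    (hμc : μc = (1 - p)⁻¹ • ∫ ω, (1 - e ω) • X ω ∂μ)
    (hμall : μall = ∫ ω, X ω ∂μ)
    (Sigt Sigc A : Matrix (Fin k) (Fin k) ℝ)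
    (hSigt : ∀ i j, Sigt i j = p⁻¹ * ∫ ω, e ω * ((X ω i - μt i) * (X ω j - μt j)) ∂μ)
    (hSigc : ∀ i j, Sigc i j =
      (1 - p)⁻¹ * ∫ ω, (1 - e ω) * ((X ω i - μc i) * (X ω j - μc j)) ∂μ)
    (hA : A = p • Sigt + (1 - p) • Sigc) (hApd : A.PosDef)
    (c : ℝ) (hc : c = (μt - μc) ⬝ᵥ A⁻¹.mulVec (μt - μc)) :
    a1 = (p * (1 - p) / (1 + p * (1 - p) * c)) • A⁻¹.mulVec (μt - μc) ∧
    a0 = p - a1 ⬝ᵥ μall := by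
  classical
  have hp0' : p ≠ 0 := ne_of_gt hp0
  have hp1' : (1 : ℝ) - p ≠ 0 := by linarith
  -- measurability and integrability basics
  have hXm : ∀ i, Measurable fun ω => X ω i := fun i => (measurable_pi_apply i).comp hX
  have heMeas : Measurable e := by
    have : e = fun ω => a0 + a1 ⬝ᵥ X ω := funext he
    rw [this]
    apply measurable_const.add
    simp only [dotProduct]
    exact Finset.measurable_sum _ fun j _ => (hXm j).const_mul (a1 j)
  have hebd : ∀ ω, ‖e ω‖ ≤ 1 := fun ω => by
    rw [Real.norm_eq_abs, abs_le]; exact ⟨by linarith [(he01 ω).1], (he01 ω).2⟩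
  have heL : MemLp e ⊤ μ :=
    memLp_top_of_bound heMeas.aestronglyMeasurable 1 (Filter.Eventually.of_forall hebd)
  have h1eL : MemLp (fun ω => 1 - e ω) ⊤ μ := (memLp_const 1).sub heL
  have heInt : Integrable e μ := heL.integrable le_top
  have hXi : ∀ i, MemLp (fun ω => X ω i) 2 μ := fun i => by
    have := (ContinuousLinearMap.proj (R := ℝ) (φ := fun _ : Fin k => ℝ) i).comp_memLp' hX2
    simpa [Function.comp_def] using this
  have hXiInt : ∀ i, Integrable (fun ω => X ω i) μ := fun i => (hXi i).integrable one_le_two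
  have hXInt : Integrable X μ := hX2.integrable one_le_two
  have hXXm : ∀ i j, MemLp (fun ω => X ω i * X ω j) 1 μ := fun i j => by
    have h : (1 : ENNReal) / 1 = 1 / 2 + 1 / 2 := by
      simp [ENNReal.inv_two_add_inv_two]
    haveI : ENNReal.HolderTriple 2 2 1 := ⟨by rw [ENNReal.inv_two_add_inv_two, inv_one]⟩
    have := (hXi j).smul (r := 1) (hXi i)
    exact this
  have hXX : ∀ i j, Integrable (fun ω => X ω i * X ω j) μ := fun i j =>
    (hXXm i j).integrable le_rfl
  have heX : ∀ i, Integrable (fun ω => e ω * X ω i) μ := fun i => by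
    have := ((hXi i).smul (r := 2) heL).integrable one_le_two
    exact this
  have h1eX : ∀ i, Integrable (fun ω => (1 - e ω) * X ω i) μ := fun i => by
    have := ((hXi i).smul (r := 2) h1eL).integrable one_le_two
    exact this
  have heXX : ∀ i j, Integrable (fun ω => e ω * (X ω i * X ω j)) μ := fun i j => by
    have := ((hXXm i j).smul (r := 1) heL).integrable le_rfl
    exact this
  have h1eXX : ∀ i j, Integrable (fun ω => (1 - e ω) * (X ω i * X ω j)) μ := fun i j => by
    have := ((hXXm i j).smul (r := 1) h1eL).integrable le_rfl
    exact this
  -- first moments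
  have hμalli : ∀ i, μall i = ∫ ω, X ω i ∂μ := fun i => by
    rw [hμall]
    have := (ContinuousLinearMap.integral_comp_comm
      (ContinuousLinearMap.proj (R := ℝ) (φ := fun _ : Fin k => ℝ) i) hXInt).symm
    simpa [Function.comp_def] using this
  have heXvInt : Integrable (fun ω => e ω • X ω) μ := by
    have := (hX2.smul (r := 2) heL).integrable one_le_two
    exact this
  have h1eXvInt : Integrable (fun ω => (1 - e ω) • X ω) μ := by
    have := (hX2.smul (r := 2) h1eL).integrable one_le_two
    exact this
  have hEt : ∀ i, ∫ ω, e ω * X ω i ∂μ = p * μt i := fun i => by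
    have h1 : (∫ ω, e ω • X ω ∂μ) i = ∫ ω, e ω * X ω i ∂μ := by
      have := (ContinuousLinearMap.integral_comp_comm
        (ContinuousLinearMap.proj (R := ℝ) (φ := fun _ : Fin k => ℝ) i) heXvInt)
      simpa [Function.comp_def, smul_eq_mul] using this.symm
    rw [hμt] at *
    simp only [Pi.smul_apply, smul_eq_mul] at *
    rw [← h1]
    field_simp
  have hEc : ∀ i, ∫ ω, (1 - e ω) * X ω i ∂μ = (1 - p) * μc i := fun i => by
    have h1 : (∫ ω, (1 - e ω) • X ω ∂μ) i = ∫ ω, (1 - e ω) * X ω i ∂μ := by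
      have := (ContinuousLinearMap.integral_comp_comm
        (ContinuousLinearMap.proj (R := ℝ) (φ := fun _ : Fin k => ℝ) i) h1eXvInt)
      simpa [Function.comp_def, smul_eq_mul] using this.symm
    rw [hμc] at *
    simp only [Pi.smul_apply, smul_eq_mul] at *
    rw [← h1]
    field_simp
  have hInte1 : ∫ ω, (1 - e ω) ∂μ = 1 - p := by
    rw [integral_sub (integrable_const 1) heInt]
    simp [hp]
  have hmix : ∀ i, μall i = p * μt i + (1 - p) * μc i := fun i => by
    rw [hμalli i, ← hEt i, ← hEc i, ← integral_add (heX i) (h1eX i)]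
    congr 1; funext ω; ring
  -- the a0 equation
  have ha0 : p = a0 + ∑ j, a1 j * μall j := by
    rw [hp]
    have h1 : (fun ω => e ω) = fun ω => a0 + ∑ j, a1 j * X ω j := by
      funext ω; rw [he ω]; simp [dotProduct]
    rw [h1, integral_add (integrable_const a0)
      (integrable_finset_sum _ fun j _ => (hXiInt j).const_mul (a1 j)),
      integral_const, integral_finset_sum _ fun j _ => (hXiInt j).const_mul (a1 j)]
    simp only [probReal_univ, measure_univ, ENNReal.toReal_one, smul_eq_mul, one_mul]
    congr 1
    exact Finset.sum_congr rfl fun j _ => by rw [integral_const_mul _ _, ← hμalli j]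
  -- second-moment equation coming from E[e X_i]
  have hMe : ∀ i, p * μt i = a0 * μall i + ∑ j, a1 j * ∫ ω, X ω j * X ω i ∂μ := fun i => by
    rw [← hEt i]
    have h1 : (fun ω => e ω * X ω i)
        = fun ω => a0 * X ω i + ∑ j, a1 j * (X ω j * X ω i) := by
      funext ω; rw [he ω]; simp [dotProduct, Finset.sum_mul, add_mul, mul_assoc]
    rw [h1, integral_add ((hXiInt i).const_mul a0)
      (integrable_finset_sum _ fun j _ => ((hXX j i)).const_mul (a1 j)),
      integral_const_mul _ _, ← hμalli i,
      integral_finset_sum _ fun j _ => ((hXX j i)).const_mul (a1 j)]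
    congr 1
    exact Finset.sum_congr rfl fun j _ => by rw [integral_const_mul _ _]
  -- entries of A
  have key : ∀ f g h l : Ω → ℝ, Integrable f μ → Integrable g μ → Integrable h μ →
      Integrable l μ →
      ∫ ω, (f ω - g ω - h ω + l ω) ∂μ
        = (∫ ω, f ω ∂μ) - (∫ ω, g ω ∂μ) - (∫ ω, h ω ∂μ) + ∫ ω, l ω ∂μ := by
    intro f g h l hf hg hh hl
    have hfg : Integrable (fun ω => f ω - g ω) μ := hf.sub hg
    have hfgh : Integrable (fun ω => f ω - g ω - h ω) μ := hfg.sub hh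
    rw [integral_add hfgh hl, integral_sub hfg hh, integral_sub hf hg]
  have hSt : ∀ i j, p * Sigt i j
      = (∫ ω, e ω * (X ω i * X ω j) ∂μ) - p * (μt i * μt j) := fun i j => by
    rw [hSigt, ← mul_assoc, mul_inv_cancel₀ hp0', one_mul]
    have h1 : (fun ω => e ω * ((X ω i - μt i) * (X ω j - μt j)))
        = fun ω => e ω * (X ω i * X ω j) - μt j * (e ω * X ω i)
            - μt i * (e ω * X ω j) + (μt i * μt j) * e ω := by
      funext ω; ring
    rw [h1, key _ _ _ _ (heXX i j) ((heX i).const_mul (μt j)) ((heX j).const_mul (μt i))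
        (heInt.const_mul (μt i * μt j)),
      integral_const_mul _ _, integral_const_mul _ _, integral_const_mul _ _, hEt i, hEt j, ← hp]
    ring
  have hSc : ∀ i j, (1 - p) * Sigc i j
      = ((∫ ω, X ω i * X ω j ∂μ) - ∫ ω, e ω * (X ω i * X ω j) ∂μ)
        - (1 - p) * (μc i * μc j) := fun i j => by
    rw [hSigc, ← mul_assoc, mul_inv_cancel₀ hp1', one_mul]
    have h1 : (fun ω => (1 - e ω) * ((X ω i - μc i) * (X ω j - μc j)))
        = fun ω => (1 - e ω) * (X ω i * X ω j) - μc j * ((1 - e ω) * X ω i)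
            - μc i * ((1 - e ω) * X ω j) + (μc i * μc j) * (1 - e ω) := by
      funext ω; ring
    have h2 : ∫ ω, (1 - e ω) * (X ω i * X ω j) ∂μ
        = (∫ ω, X ω i * X ω j ∂μ) - ∫ ω, e ω * (X ω i * X ω j) ∂μ := by
      rw [← integral_sub (hXX i j) (heXX i j)]
      congr 1; funext ω; ring
    have h1eint : Integrable (fun ω => (1 : ℝ) - e ω) μ := (integrable_const 1).sub heInt
    rw [h1, key _ _ _ _ (h1eXX i j) ((h1eX i).const_mul (μc j)) ((h1eX j).const_mul (μc i))
        (h1eint.const_mul (μc i * μc j)),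
      integral_const_mul _ _, integral_const_mul _ _, integral_const_mul _ _, hEc i, hEc j, h2, hInte1]
    ring
  have hAij : ∀ i j, A i j = (∫ ω, X ω i * X ω j ∂μ)
      - p * (μt i * μt j) - (1 - p) * (μc i * μc j) := fun i j => by
    have h1 : A i j = p * Sigt i j + (1 - p) * Sigc i j := by
      rw [hA]; simp [Matrix.add_apply, smul_eq_mul]
    rw [h1, hSt i j, hSc i j]; ring
  have hMsymm : ∀ i j, (∫ ω, X ω i * X ω j ∂μ) = ∫ ω, X ω j * X ω i ∂μ := fun i j => by
    congr 1; funext ω; ring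
  -- the key vector identity
  set d : Fin k → ℝ := μt - μc with hd
  set st : ℝ := ∑ j, a1 j * μt j with hst
  set sc : ℝ := ∑ j, a1 j * μc j with hsc
  have hta : ∑ j, a1 j * μall j = p * st + (1 - p) * sc := by
    rw [hst, hsc, Finset.mul_sum, Finset.mul_sum, ← Finset.sum_add_distrib]
    exact Finset.sum_congr rfl fun j _ => by rw [hmix j]; ring
  have hAa1 : A.mulVec a1 = (p * (1 - p) * (1 - (st - sc))) • d := by
    funext i
    simp only [Matrix.mulVec, dotProduct, Pi.smul_apply, smul_eq_mul, hd, Pi.sub_apply]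
    have h1 : ∑ j, A i j * a1 j
        = (∑ j, a1 j * ∫ ω, X ω j * X ω i ∂μ) - p * μt i * st - (1 - p) * μc i * sc := by
      rw [Finset.sum_congr rfl fun j (_ : j ∈ Finset.univ) => by
        rw [hAij i j, hMsymm i j]]
      rw [show (fun j => ((∫ ω, X ω j * X ω i ∂μ) - p * (μt i * μt j)
          - (1 - p) * (μc i * μc j)) * a1 j)
        = fun j => a1 j * (∫ ω, X ω j * X ω i ∂μ) - p * μt i * (a1 j * μt j)
          - (1 - p) * μc i * (a1 j * μc j) from funext fun j => by ring]
      rw [Finset.sum_sub_distrib, Finset.sum_sub_distrib, ← Finset.mul_sum, ← Finset.mul_sum]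
    have h2 : ∑ j, a1 j * ∫ ω, X ω j * X ω i ∂μ = p * μt i - a0 * μall i := by
      have := hMe i; linarith
    have h3 : a0 = p - (p * st + (1 - p) * sc) := by rw [← hta]; linarith [ha0]
    rw [h1, h2, h3, hmix i]; ring
  -- invert
  have hdet : IsUnit A.det := isUnit_iff_ne_zero.2 (ne_of_gt hApd.det_pos)
  have hinv : a1 = (p * (1 - p) * (1 - (st - sc))) • A⁻¹.mulVec d := by
    have h1 : a1 = A⁻¹.mulVec (A.mulVec a1) := by
      rw [Matrix.mulVec_mulVec, Matrix.nonsing_inv_mul _ hdet, Matrix.one_mulVec]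
    rw [h1, hAa1, Matrix.mulVec_smul]
  -- compute s
  have hs : st - sc = p * (1 - p) * (1 - (st - sc)) * c := by
    have h1 : st - sc = ∑ j, a1 j * d j := by
      rw [hst, hsc, ← Finset.sum_sub_distrib]
      refine Finset.sum_congr rfl fun j _ => ?_
      simp only [hd, Pi.sub_apply]
      ring
    have h2 : ∀ j, a1 j = p * (1 - p) * (1 - (st - sc)) * (A⁻¹.mulVec d) j := fun j => by
      rw [hinv]; simp
    calc st - sc = ∑ j, a1 j * d j := h1
      _ = ∑ j, p * (1 - p) * (1 - (st - sc)) * (d j * (A⁻¹.mulVec d) j) :=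
          Finset.sum_congr rfl fun j _ => by rw [h2 j]; ring
      _ = p * (1 - p) * (1 - (st - sc)) * ∑ j, d j * (A⁻¹.mulVec d) j :=
          (Finset.mul_sum _ _ _).symm
      _ = p * (1 - p) * (1 - (st - sc)) * c := by rw [hc]; rfl
  have hc0 : 0 ≤ c := by
    rw [hc]
    have h := (Matrix.PosDef.inv hApd).posSemidef.re_dotProduct_nonneg d
    simpa [hd] using h
  have hq : (0:ℝ) < 1 + p * (1 - p) * c := by
    nlinarith [mul_nonneg (mul_nonneg hp0.le (show (0:ℝ) ≤ 1 - p by linarith)) hc0]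
  have h1s : (1 - (st - sc)) * (1 + p * (1 - p) * c) = 1 := by nlinarith [hs]
  have hcoef : p * (1 - p) * (1 - (st - sc)) = p * (1 - p) / (1 + p * (1 - p) * c) := by
    rw [eq_div_iff (ne_of_gt hq)]
    linear_combination p * (1 - p) * h1s
  refine ⟨?_, ?_⟩
  · rw [hinv, hcoef]
  · have : a1 ⬝ᵥ μall = ∑ j, a1 j * μall j := rfl
    rw [this]; linarith [ha0]
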